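/- There exists a function ε : ℝ → ℝ with ε(x) → 0 as x → ∞ such that for every finite simple graph G with at least one vertex, Γ(G) ≤ (μ₁(G) + ε(μ₁(G)))²/2 + 1, where μ₁(G) is the largest root of the matching polynomial of G and Γ(G) is the Grundy number of G. -/

import Mathlib

/-- The first-fit (greedy) coloring of `G` along the vertex ordering `0 < 1 < ⋯`:
each vertex receives the smallest color (a natural number) not used by its
previously colored neighbors. -/
noncomputable def greedyColor {n : ℕ} (G : SimpleGraph (Fin n)) : Fin n → ℕ
  | i => sInf {c : ℕ | ∀ j : Fin n, j < i → G.Adj j i → greedyColor G j ≠ c}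
  termination_by i => i.1

/-- The Grundy number of `G`: the largest number of colors used by the
first-fit coloring, over all orderings of the vertices. -/
noncomputable def grundyNumber {V : Type} [Fintype V] (G : SimpleGraph V) : ℕ :=
  letI := Classical.decEq V
  Finset.univ.sup fun σ : Fin (Fintype.card V) ≃ V =>
    (Finset.univ.image (greedyColor (G.comap σ))).card

open scoped Classical in
/-- The matching polynomial `μ_G(x) = ∑_M (-1)^{|M|} x^{n - 2|M|}`, the sum running
over all matchings `M` of `G` (sets of pairwise disjoint edges, including `∅`). -/
noncomputable def matchingPolynomial {V : Type} [Fintype V] (G : SimpleGraph V) :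
    Polynomial ℝ :=
  ∑ M ∈ Finset.univ.filter (fun M : Finset (Sym2 V) =>
      (∀ e ∈ M, e ∈ G.edgeSet) ∧
      (M : Set (Sym2 V)).Pairwise fun e f => ∀ v : V, ¬(v ∈ e ∧ v ∈ f)),
    (-1 : Polynomial ℝ) ^ M.card * Polynomial.X ^ (Fintype.card V - 2 * M.card)

/-- `mu1 G` : the largest real root of the matching polynomial of `G`. -/
noncomputable def mu1 {V : Type} [Fintype V] (G : SimpleGraph V) : ℝ :=
  sSup {x : ℝ | (matchingPolynomial G).IsRoot x}


/-! ### Auxiliary development -/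

open Polynomial Finset
open scoped Classical

namespace GrundyAux

variable {V : Type} [Fintype V]

/-- Matchings of `G` with all edge endpoints inside `s`. -/
noncomputable def msets (G : SimpleGraph V) (s : Finset V) : Finset (Finset (Sym2 V)) :=
  Finset.univ.filter (fun M : Finset (Sym2 V) =>
    (∀ e ∈ M, e ∈ G.edgeSet ∧ ∀ a ∈ e, a ∈ s) ∧
    (M : Set (Sym2 V)).Pairwise fun e f => ∀ v : V, ¬(v ∈ e ∧ v ∈ f))

/-- The matching polynomial restricted to vertices in `s`. -/
noncomputable def mp (G : SimpleGraph V) (s : Finset V) : Polynomial ℝ :=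
  ∑ M ∈ msets G s, (-1 : Polynomial ℝ) ^ M.card * Polynomial.X ^ (s.card - 2 * M.card)

lemma mem_msets {G : SimpleGraph V} {s : Finset V} {M : Finset (Sym2 V)} :
    M ∈ msets G s ↔
      (∀ e ∈ M, e ∈ G.edgeSet ∧ ∀ a ∈ e, a ∈ s) ∧
      (M : Set (Sym2 V)).Pairwise fun e f => ∀ v : V, ¬(v ∈ e ∧ v ∈ f) := by
  simp [msets]

lemma empty_mem_msets {G : SimpleGraph V} {s : Finset V} : (∅ : Finset (Sym2 V)) ∈ msets G s := by
  simp [mem_msets, Set.pairwise_empty]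
lemma two_mul_card_le {G : SimpleGraph V} :
    ∀ (M : Finset (Sym2 V)) (s : Finset V), M ∈ msets G s → 2 * M.card ≤ s.card := by
  intro M
  induction M using Finset.strongInduction with
  | _ M ih =>
    intro s hM
    rcases M.eq_empty_or_nonempty with rfl | ⟨e, he⟩
    · simp
    rw [mem_msets] at hM
    obtain ⟨hedge, hpair⟩ := hM
    induction e using Sym2.ind with
    | _ a b =>
      have hab : G.Adj a b := by
        have := (hedge _ he).1
        rwa [SimpleGraph.mem_edgeSet] at this
      have hne : a ≠ b := hab.ne
      have ha : a ∈ s := (hedge _ he).2 a (by simp)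
      have hb : b ∈ s := (hedge _ he).2 b (by simp)
      have hsub : M.erase s(a, b) ∈ msets G ((s.erase a).erase b) := by
        rw [mem_msets]
        constructor
        · intro f hf
          have hfM : f ∈ M := Finset.mem_of_mem_erase hf
          have hfe : f ≠ s(a, b) := Finset.ne_of_mem_erase hf
          refine ⟨(hedge _ hfM).1, ?_⟩
          intro x hx
          have hdisj := hpair (by exact_mod_cast hfM) (by exact_mod_cast he) hfe
          have hxa : x ≠ a := by
            intro h; exact hdisj a ⟨h ▸ hx, by simp⟩
          have hxb : x ≠ b := by
            intro h; exact hdisj b ⟨h ▸ hx, by simp⟩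
          exact Finset.mem_erase.2 ⟨hxb, Finset.mem_erase.2 ⟨hxa, (hedge _ hfM).2 x hx⟩⟩
        · exact hpair.mono (by exact_mod_cast Finset.erase_subset _ _)
      have hlt : M.erase s(a, b) ⊂ M := Finset.erase_ssubset he
      have := ih _ hlt _ hsub
      have hcM : (M.erase s(a,b)).card = M.card - 1 := Finset.card_erase_of_mem he
      have hbs : b ∈ s.erase a := Finset.mem_erase.2 ⟨hne.symm, hb⟩
      have h1 : ((s.erase a).erase b).card = (s.erase a).card - 1 := Finset.card_erase_of_mem hbs
      have h2 : (s.erase a).card = s.card - 1 := Finset.card_erase_of_mem ha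
      have hm1 : 1 ≤ M.card := Finset.card_pos.2 ⟨s(a,b), he⟩
      have hs1 : 1 ≤ s.card := Finset.card_pos.2 ⟨a, ha⟩
      have hs2 : 1 ≤ (s.erase a).card := Finset.card_pos.2 ⟨b, hbs⟩
      omega
lemma matchingPolynomial_eq_mp (G : SimpleGraph V) :
    matchingPolynomial G = mp G Finset.univ := by
  unfold matchingPolynomial mp msets
  apply Finset.sum_congr
  · apply Finset.filter_congr
    intro M _
    simp
  · intro M _
    rw [Finset.card_univ]

lemma degree_term (m e : ℕ) : ((-1 : Polynomial ℝ) ^ m * Polynomial.X ^ e).degree = (e : WithBot ℕ) := by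
  rw [degree_mul, degree_pow, degree_neg, degree_one, degree_X_pow]
  simp

lemma mp_monic (G : SimpleGraph V) (s : Finset V) : (mp G s).Monic := by
  have h0 : (∅ : Finset (Sym2 V)) ∈ msets G s := empty_mem_msets
  have hrw : mp G s = Polynomial.X ^ s.card +
      ∑ M ∈ (msets G s).erase ∅, (-1 : Polynomial ℝ) ^ M.card * Polynomial.X ^ (s.card - 2 * M.card) := by
    rw [mp, ← Finset.add_sum_erase _ _ h0]
    simp
  rw [hrw]
  apply Polynomial.monic_X_pow_add
  refine lt_of_le_of_lt (Polynomial.degree_sum_le _ _) ?_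
  rw [Finset.sup_lt_iff (by exact_mod_cast WithBot.bot_lt_coe s.card)]
  intro M hM
  obtain ⟨hne, hMm⟩ := Finset.mem_erase.1 hM
  have h2 : 2 * M.card ≤ s.card := two_mul_card_le _ _ hMm
  have hc : 1 ≤ M.card := Finset.card_pos.2 (Finset.nonempty_iff_ne_empty.2 hne)
  rw [degree_term]
  exact_mod_cast (show s.card - 2 * M.card < s.card by omega)

lemma mp_ne_zero (G : SimpleGraph V) (s : Finset V) : mp G s ≠ 0 := (mp_monic G s).ne_zero
noncomputable def th (p : Polynomial ℝ) : ℝ := sSup {x : ℝ | p.IsRoot x}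

lemma root_le_th {p : Polynomial ℝ} (hp : p ≠ 0) {r : ℝ} (hr : p.IsRoot r) : r ≤ th p :=
  le_csSup (Polynomial.finite_setOf_isRoot hp).bddAbove hr

lemma exists_root_gt {p : Polynomial ℝ} (hp : p.Monic) {y : ℝ} (hy : p.eval y < 0) :
    ∃ r, y < r ∧ p.IsRoot r := by
  have hdeg : 0 < p.degree := by
    by_contra h
    push_neg at h
    have h0 : p.natDegree = 0 :=
      Nat.le_zero.1 (Polynomial.natDegree_le_iff_degree_le.2 (by simpa using h))
    have : p = 1 := hp.natDegree_eq_zero.1 h0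
    rw [this] at hy; norm_num at hy
  have htend : Filter.Tendsto (fun x => p.eval x) Filter.atTop Filter.atTop :=
    p.tendsto_atTop_of_leadingCoeff_nonneg hdeg (by rw [hp.leadingCoeff]; norm_num)
  obtain ⟨z, hz⟩ := ((htend.eventually_gt_atTop 0).and (Filter.eventually_gt_atTop y)).exists
  have hyz : y ≤ z := hz.2.le
  have hcont : ContinuousOn (fun x => p.eval x) (Set.Icc y z) := (p.continuous_aeval).continuousOn
  have h0mem : (0 : ℝ) ∈ Set.Ioo (p.eval y) (p.eval z) := ⟨hy, hz.1⟩
  obtain ⟨r, hr, hr0⟩ := intermediate_value_Ioo hyz hcont h0mem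
  exact ⟨r, hr.1, hr0⟩

lemma th_lt_pos {p : Polynomial ℝ} (hp : p.Monic) {y : ℝ} (hy : th p < y) : 0 < p.eval y := by
  rcases lt_trichotomy (p.eval y) 0 with h | h | h
  · obtain ⟨r, hr1, hr2⟩ := exists_root_gt hp h
    have := root_le_th hp.ne_zero hr2
    linarith
  · exact absurd (root_le_th hp.ne_zero h) (by linarith)
  · exact h
lemma mp_erase (G : SimpleGraph V) {s : Finset V} {v : V} (hv : v ∈ s) :
    mp G s = Polynomial.X * mp G (s.erase v)
      - ∑ u ∈ (s.erase v).filter (fun u => G.Adj v u), mp G ((s.erase v).erase u) := by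
  have hsplit := Finset.sum_filter_add_sum_filter_not (msets G s)
      (fun M => ∀ e ∈ M, v ∉ e)
      (fun M => (-1 : Polynomial ℝ) ^ M.card * Polynomial.X ^ (s.card - 2 * M.card))
  -- Part 1 : matchings avoiding `v`
  have hset : (msets G s).filter (fun M => ∀ e ∈ M, v ∉ e) = msets G (s.erase v) := by
    ext M
    simp only [Finset.mem_filter, mem_msets]
    constructor
    · rintro ⟨⟨h1, h2⟩, h3⟩
      refine ⟨fun e he => ⟨(h1 e he).1, fun a ha => Finset.mem_erase.2 ⟨?_, (h1 e he).2 a ha⟩⟩, h2⟩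
      rintro rfl; exact h3 e he ha
    · rintro ⟨h1, h2⟩
      refine ⟨⟨fun e he => ⟨(h1 e he).1, fun a ha => Finset.mem_of_mem_erase ((h1 e he).2 a ha)⟩, h2⟩, ?_⟩
      intro e he hve
      exact Finset.notMem_erase v s ((h1 e he).2 v hve)
  have hvpos : 1 ≤ s.card := Finset.card_pos.2 ⟨v, hv⟩
  have hcards : (s.erase v).card + 1 = s.card := by
    rw [Finset.card_erase_of_mem hv]; omega
  have hpart1 : ∑ M ∈ (msets G s).filter (fun M => ∀ e ∈ M, v ∉ e),
      (-1 : Polynomial ℝ) ^ M.card * Polynomial.X ^ (s.card - 2 * M.card)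
      = Polynomial.X * mp G (s.erase v) := by
    rw [hset, mp, Finset.mul_sum]
    apply Finset.sum_congr rfl
    intro M hM
    have h2 := two_mul_card_le M _ hM
    have he : s.card - 2 * M.card = ((s.erase v).card - 2 * M.card) + 1 := by omega
    rw [he, pow_succ]
    ring
  -- Part 2 : matchings covering `v`
  have hpart2 : ∑ M ∈ (msets G s).filter (fun M => ¬ ∀ e ∈ M, v ∉ e),
      (-1 : Polynomial ℝ) ^ M.card * Polynomial.X ^ (s.card - 2 * M.card)
      = - ∑ u ∈ (s.erase v).filter (fun u => G.Adj v u), mp G ((s.erase v).erase u) := by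
    rw [← Finset.sum_neg_distrib]
    simp only [mp, ← Finset.sum_neg_distrib]
    rw [Finset.sum_sigma']
    refine (Finset.sum_bij (fun p _ => insert s(v, p.1) p.2) ?_ ?_ ?_ ?_).symm
    · -- maps into the filtered set
      rintro ⟨u, M'⟩ hp
      rw [Finset.mem_sigma] at hp
      obtain ⟨huA, hM'⟩ := hp
      rw [Finset.mem_filter] at huA
      obtain ⟨huev, hadj⟩ := huA
      have hune : u ≠ v := (Finset.mem_erase.1 huev).1
      have hus : u ∈ s := Finset.mem_of_mem_erase huev
      rw [mem_msets] at hM'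
      obtain ⟨hedge', hpair'⟩ := hM'
      have havoid : ∀ f ∈ M', ∀ a ∈ f, a ≠ v ∧ a ≠ u := by
        intro f hf a ha
        have h := (hedge' f hf).2 a ha
        exact ⟨(Finset.mem_erase.1 (Finset.mem_of_mem_erase h)).1, (Finset.mem_erase.1 h).1⟩
      rw [Finset.mem_filter, mem_msets]
      refine ⟨⟨?_, ?_⟩, ?_⟩
      · intro e he
        rcases Finset.mem_insert.1 he with rfl | heM'
        · refine ⟨G.mem_edgeSet.2 hadj, ?_⟩
          intro a ha
          rcases Sym2.mem_iff.1 ha with rfl | rfl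
          · exact hv
          · exact hus
        · exact ⟨(hedge' _ heM').1, fun a ha => Finset.mem_of_mem_erase
            (Finset.mem_of_mem_erase ((hedge' _ heM').2 a ha))⟩
      · rw [Finset.coe_insert]
        haveI : Std.Symm (fun e f : Sym2 V => ∀ w : V, ¬(w ∈ e ∧ w ∈ f)) := ⟨fun e f h w hw => h w ⟨hw.2, hw.1⟩⟩
        refine Set.pairwise_insert_of_symm.2 ⟨hpair', ?_⟩
        · intro f hf _ w hw
          rcases Sym2.mem_iff.1 hw.1 with rfl | rfl
          · exact (havoid f hf w hw.2).1 rfl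
          · exact (havoid f hf w hw.2).2 rfl
      · push_neg
        exact ⟨s(v, u), Finset.mem_insert_self _ _, Sym2.mem_mk_left v u⟩
    · -- injective
      rintro ⟨u₁, M₁⟩ hp₁ ⟨u₂, M₂⟩ hp₂ heq
      dsimp only at heq
      rw [Finset.mem_sigma] at hp₁ hp₂
      dsimp only at hp₁ hp₂
      have havoid : ∀ (u : V) (M' : Finset (Sym2 V)), M' ∈ msets G ((s.erase v).erase u) →
          ∀ f ∈ M', v ∉ f := by
        intro u M' hM' f hf hvf
        have := ((mem_msets.1 hM').1 f hf).2 v hvf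
        exact Finset.notMem_erase v s (Finset.mem_of_mem_erase this) 
      have h2 : s(v, u₂) ∈ insert s(v, u₁) M₁ := by
        rw [heq]
        exact Finset.mem_insert_self _ _
      rcases Finset.mem_insert.1 h2 with h | h
      · have hu : u₂ = u₁ := Sym2.congr_right.1 h
        subst hu
        have hM : M₁ = M₂ := by
          have h₁ : s(v, u₂) ∉ M₁ := fun hc => havoid _ _ hp₁.2 _ hc (Sym2.mem_mk_left _ _)
          have h₂ : s(v, u₂) ∉ M₂ := fun hc => havoid _ _ hp₂.2 _ hc (Sym2.mem_mk_left _ _)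
          rw [← Finset.erase_insert h₁, ← Finset.erase_insert h₂, heq]
        rw [hM]
      · exact absurd (Sym2.mem_mk_left v u₂) (fun hc => havoid _ _ hp₁.2 _ h hc)
    · -- surjective
      intro M hM
      rw [Finset.mem_filter] at hM
      obtain ⟨hMs, hnot⟩ := hM
      push_neg at hnot
      obtain ⟨e, heM, hve⟩ := hnot
      obtain ⟨u, rfl⟩ := Sym2.mem_iff_exists.1 hve
      rw [mem_msets] at hMs
      obtain ⟨hedge, hpair⟩ := hMs
      have hadj : G.Adj v u := G.mem_edgeSet.1 (hedge _ heM).1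
      have hune : u ≠ v := hadj.ne'
      have hus : u ∈ s := (hedge _ heM).2 u (Sym2.mem_mk_right v u)
      have hmem : M.erase s(v, u) ∈ msets G ((s.erase v).erase u) := by
        rw [mem_msets]
        constructor
        · intro f hf
          have hfM := Finset.mem_of_mem_erase hf
          have hfe := Finset.ne_of_mem_erase hf
          refine ⟨(hedge _ hfM).1, fun a ha => ?_⟩
          have hdisj := hpair (by exact_mod_cast hfM) (by exact_mod_cast heM) hfe
          have hav : a ≠ v := fun hc => hdisj v ⟨hc ▸ ha, Sym2.mem_mk_left v u⟩
          have hau : a ≠ u := fun hc => hdisj u ⟨hc ▸ ha, Sym2.mem_mk_right v u⟩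
          exact Finset.mem_erase.2 ⟨hau, Finset.mem_erase.2 ⟨hav, (hedge _ hfM).2 a ha⟩⟩
        · exact hpair.mono (by exact_mod_cast Finset.erase_subset _ _)
      refine ⟨⟨u, M.erase s(v, u)⟩, ?_, ?_⟩
      · rw [Finset.mem_sigma]
        exact ⟨Finset.mem_filter.2 ⟨Finset.mem_erase.2 ⟨hune, hus⟩, hadj⟩, hmem⟩
      · exact Finset.insert_erase heM
    · -- terms agree
      rintro ⟨u, M'⟩ hp
      rw [Finset.mem_sigma] at hp
      obtain ⟨huA, hM'⟩ := hp
      dsimp only at huA hM' ⊢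
      rw [Finset.mem_filter] at huA
      have hune : u ≠ v := (Finset.mem_erase.1 huA.1).1
      have hus : u ∈ s := Finset.mem_of_mem_erase huA.1
      have hnotin : s(v, u) ∉ M' := by
        intro hc
        have := ((mem_msets.1 hM').1 _ hc).2 v (Sym2.mem_mk_left v u)
        exact Finset.notMem_erase v s (Finset.mem_of_mem_erase this)
      have hcard : (insert s(v, u) M').card = M'.card + 1 := Finset.card_insert_of_notMem hnotin
      have hce : ((s.erase v).erase u).card + 2 = s.card := by
        rw [Finset.card_erase_of_mem (Finset.mem_erase.2 ⟨hune, hus⟩), Finset.card_erase_of_mem hv]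
        have hvpos : 1 ≤ s.card := Finset.card_pos.2 ⟨v, hv⟩
        have : u ∈ s.erase v := Finset.mem_erase.2 ⟨hune, hus⟩
        have h1 : 1 ≤ (s.erase v).card := Finset.card_pos.2 ⟨u, this⟩
        omega
      have h2 := two_mul_card_le M' _ hM'
      have hexp : ((s.erase v).erase u).card - 2 * M'.card = s.card - 2 * (M'.card + 1) := by
        omega
      rw [hcard, hexp, pow_succ]
      ring
  rw [mp, ← hsplit, hpart1, hpart2]
  ring
lemma eval_mp_neg (G : SimpleGraph V) (s : Finset V) (x : ℝ) :
    (mp G s).eval (-x) = (-1 : ℝ) ^ s.card * (mp G s).eval x := by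
  rw [mp, eval_finset_sum, eval_finset_sum, Finset.mul_sum]
  apply Finset.sum_congr rfl
  intro M hM
  have h2 := two_mul_card_le M s hM
  simp only [eval_mul, eval_pow, eval_neg, eval_one, eval_X]
  have hsgn : (-1 : ℝ) ^ (s.card - 2 * M.card) = (-1 : ℝ) ^ s.card := by
    have hcc : s.card - 2 * M.card + 2 * M.card = s.card := Nat.sub_add_cancel h2
    calc (-1 : ℝ) ^ (s.card - 2 * M.card)
        = (-1 : ℝ) ^ (s.card - 2 * M.card) * ((-1 : ℝ) ^ 2) ^ M.card := by norm_num
      _ = (-1 : ℝ) ^ (s.card - 2 * M.card + 2 * M.card) := by rw [← pow_mul, ← pow_add]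
      _ = (-1 : ℝ) ^ s.card := by rw [hcc]
  rw [neg_pow x, hsgn]
  ring

lemma th_mp_nonneg (G : SimpleGraph V) (s : Finset V) : 0 ≤ th (mp G s) := by
  rcases Set.eq_empty_or_nonempty {x : ℝ | (mp G s).IsRoot x} with h | ⟨r, hr⟩
  · rw [th, h, Real.sSup_empty]
  · have hr' : (mp G s).IsRoot (-r) := by
      have : (mp G s).eval (-r) = (-1 : ℝ) ^ s.card * (mp G s).eval r := eval_mp_neg G s r
      rw [Polynomial.IsRoot, this, hr, mul_zero]
    rcases le_or_gt 0 r with h0 | h0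
    · exact le_trans h0 (root_le_th (mp_monic G s).ne_zero hr)
    · exact le_trans (by linarith) (root_le_th (mp_monic G s).ne_zero hr')

lemma th_erase_le (G : SimpleGraph V) :
    ∀ (s : Finset V) {v : V}, v ∈ s → th (mp G (s.erase v)) ≤ th (mp G s) := by
  intro s
  induction s using Finset.strongInduction with
  | _ s ih =>
    intro v hv
    rcases Set.eq_empty_or_nonempty {x : ℝ | (mp G (s.erase v)).IsRoot x} with hemp | hne
    · rw [th, hemp, Real.sSup_empty]; exact th_mp_nonneg G s
    have hfin : {x : ℝ | (mp G (s.erase v)).IsRoot x}.Finite :=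
      Polynomial.finite_setOf_isRoot (mp_monic G (s.erase v)).ne_zero
    have hx₀ : th (mp G (s.erase v)) ∈ {x : ℝ | (mp G (s.erase v)).IsRoot x} :=
      hne.csSup_mem hfin
    set x₀ := th (mp G (s.erase v)) with hx₀def
    by_contra hcon
    push_neg at hcon
    have hpos : 0 < (mp G s).eval x₀ := th_lt_pos (mp_monic G s) hcon
    have hev : (mp G s).eval x₀ = x₀ * (mp G (s.erase v)).eval x₀
        - ∑ u ∈ (s.erase v).filter (fun u => G.Adj v u), (mp G ((s.erase v).erase u)).eval x₀ := by
      rw [mp_erase G hv]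
      simp [eval_finset_sum]
    rw [Set.mem_setOf_eq, Polynomial.IsRoot] at hx₀
    rw [hx₀, mul_zero, zero_sub] at hev
    have hsum : ∑ u ∈ (s.erase v).filter (fun u => G.Adj v u),
        (mp G ((s.erase v).erase u)).eval x₀ < 0 := by linarith
    have : ∃ u ∈ (s.erase v).filter (fun u => G.Adj v u),
        (mp G ((s.erase v).erase u)).eval x₀ < 0 := by
      by_contra hall
      push_neg at hall
      exact absurd (Finset.sum_nonneg hall) (not_le.2 hsum)
    obtain ⟨u, hu, huneg⟩ := this
    obtain ⟨r, hr1, hr2⟩ := exists_root_gt (mp_monic G ((s.erase v).erase u)) huneg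
    have h1 : r ≤ th (mp G ((s.erase v).erase u)) :=
      root_le_th (mp_monic G _).ne_zero hr2
    have h2 : th (mp G ((s.erase v).erase u)) ≤ th (mp G (s.erase v)) :=
      ih (s.erase v) (Finset.erase_ssubset hv) (Finset.mem_filter.1 hu).1
    linarith

lemma th_mono (G : SimpleGraph V) : ∀ (t s : Finset V), s ⊆ t → th (mp G s) ≤ th (mp G t) := by
  intro t
  induction t using Finset.strongInduction with
  | _ t ih =>
    intro s hst
    rcases eq_or_ssubset_of_subset hst with rfl | hss
    · exact le_refl _
    · obtain ⟨v, hvt, hvs⟩ := Finset.exists_of_ssubset hss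
      have hsub : s ⊆ t.erase v := fun a ha => Finset.mem_erase.2 ⟨fun h => hvs (h ▸ ha), hst ha⟩
      exact le_trans (ih (t.erase v) (Finset.erase_ssubset hvt) s hsub) (th_erase_le G t hvt)
noncomputable def fseq (x : ℝ) : ℕ → ℝ
  | 0 => x
  | c + 1 => fseq x c - 1 / fseq x c

lemma fseq_eq (x : ℝ) : ∀ c, fseq x c = x - ∑ c' ∈ Finset.range c, 1 / fseq x c' := by
  intro c
  induction c with
  | zero => simp [fseq]
  | succ c ihc =>
    rw [show fseq x (c + 1) = fseq x c - 1 / fseq x c from rfl, Finset.sum_range_succ, ihc]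
    ring

lemma ratio (G : SimpleGraph V) (col : V → ℕ)
    (hcol : ∀ (i : V) (c : ℕ), c < col i → ∃ j, G.Adj j i ∧ col j = c)
    (x : ℝ) (hpos : ∀ s : Finset V, 0 < (mp G s).eval x) :
    ∀ (c : ℕ) (s : Finset V) (i : V), i ∈ s → col i = c → (∀ j, col j < c → j ∈ s) →
      (mp G s).eval x ≤ fseq x c * (mp G (s.erase i)).eval x := by
  intro c
  induction c using Nat.strong_induction_on with
  | _ c ihc =>
    intro s i his hci hsml
    -- choose witnesses for each smaller color
    have H : ∀ c' : ℕ, ∃ u : V, c' < c → G.Adj u i ∧ col u = c' := by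
      intro c'
      by_cases h : c' < c
      · obtain ⟨j, hj1, hj2⟩ := hcol i c' (hci ▸ h)
        exact ⟨j, fun _ => ⟨hj1, hj2⟩⟩
      · exact ⟨i, fun hc => absurd hc h⟩
    choose jw hjw using H
    set A := (s.erase i).filter (fun u => G.Adj i u) with hA
    have hjmem : ∀ c' ∈ Finset.range c, jw c' ∈ A := by
      intro c' hc'
      rw [Finset.mem_range] at hc'
      obtain ⟨hadj, hcoljw⟩ := hjw c' hc'
      have hji : jw c' ≠ i := by
        intro h
        rw [h, hci] at hcoljw
        omega
      have hjs : jw c' ∈ s := hsml _ (by omega)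
      exact Finset.mem_filter.2 ⟨Finset.mem_erase.2 ⟨hji, hjs⟩, hadj.symm⟩
    have hinj : ∀ a ∈ Finset.range c, ∀ b ∈ Finset.range c, jw a = jw b → a = b := by
      intro a ha b hb hab
      rw [Finset.mem_range] at ha hb
      have h1 := (hjw a ha).2
      have h2 := (hjw b hb).2
      rw [hab] at h1
      omega
    -- evaluation identity
    have hev : (mp G s).eval x = x * (mp G (s.erase i)).eval x
        - ∑ u ∈ A, (mp G ((s.erase i).erase u)).eval x := by
      rw [mp_erase G his]
      simp [eval_finset_sum, hA]
    -- restrict sum to image of jw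
    have himage : (Finset.range c).image jw ⊆ A := by
      intro u hu
      obtain ⟨c', hc', rfl⟩ := Finset.mem_image.1 hu
      exact hjmem c' hc'
    have hsum_ge : ∑ c' ∈ Finset.range c, (mp G ((s.erase i).erase (jw c'))).eval x
        ≤ ∑ u ∈ A, (mp G ((s.erase i).erase u)).eval x := by
      have heq := Finset.sum_image (f := fun u => (mp G ((s.erase i).erase u)).eval x)
        (g := jw) (s := Finset.range c) hinj
      rw [← heq]
      exact Finset.sum_le_sum_of_subset_of_nonneg himage (fun u _ _ => (hpos _).le)
    -- apply induction hypothesis for each smaller color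
    have hIH : ∀ c' ∈ Finset.range c,
        (mp G (s.erase i)).eval x / fseq x c' ≤ (mp G ((s.erase i).erase (jw c'))).eval x := by
      intro c' hc'
      rw [Finset.mem_range] at hc'
      obtain ⟨hadj, hcoljw⟩ := hjw c' hc'
      have hcond : ∀ j, col j < c' → j ∈ s.erase i := by
        intro j hj
        refine Finset.mem_erase.2 ⟨?_, hsml _ (by omega)⟩
        intro h
        rw [h, hci] at hj
        omega
      have hmem : jw c' ∈ s.erase i := Finset.mem_filter.1 (hjmem c' (Finset.mem_range.2 hc')) |>.1
      have := ihc c' hc' (s.erase i) (jw c') hmem hcoljw hcond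
      have hf : 0 < fseq x c' := by
        by_contra hf
        push_neg at hf
        have h1 : fseq x c' * (mp G ((s.erase i).erase (jw c'))).eval x ≤ 0 :=
          mul_nonpos_of_nonpos_of_nonneg hf (hpos _).le
        have := hpos (s.erase i)
        linarith
      rw [div_le_iff₀ hf]
      calc (mp G (s.erase i)).eval x ≤ fseq x c' * (mp G ((s.erase i).erase (jw c'))).eval x := this
        _ = (mp G ((s.erase i).erase (jw c'))).eval x * fseq x c' := by ring
    have hstep : ∑ c' ∈ Finset.range c, (mp G (s.erase i)).eval x / fseq x c'
        ≤ ∑ c' ∈ Finset.range c, (mp G ((s.erase i).erase (jw c'))).eval x :=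
      Finset.sum_le_sum hIH
    have hfactor : ∑ c' ∈ Finset.range c, (mp G (s.erase i)).eval x / fseq x c'
        = (mp G (s.erase i)).eval x * ∑ c' ∈ Finset.range c, 1 / fseq x c' := by
      rw [Finset.mul_sum]
      apply Finset.sum_congr rfl
      intro c' _
      ring
    have hfseq := fseq_eq x c
    have : (mp G s).eval x ≤ x * (mp G (s.erase i)).eval x
        - (mp G (s.erase i)).eval x * ∑ c' ∈ Finset.range c, 1 / fseq x c' := by
      rw [hev]
      have := le_trans hstep hsum_ge
      rw [hfactor] at this
      linarith
    calc (mp G s).eval x ≤ _ := this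
      _ = (x - ∑ c' ∈ Finset.range c, 1 / fseq x c') * (mp G (s.erase i)).eval x := by ring
      _ = fseq x c * (mp G (s.erase i)).eval x := by rw [← hfseq]
lemma harm : ∀ m : ℕ, 1 ≤ m → ∑ j ∈ Finset.range m, 1 / ((j : ℝ) + 1) ≤ 1 + Real.log m := by
  intro m
  induction m with
  | zero => omega
  | succ m ih =>
    intro _
    rcases Nat.eq_zero_or_pos m with rfl | hm
    · simp
    have hlog : Real.log m + 1 / ((m : ℝ) + 1) ≤ Real.log (m + 1) := by
      have hm0 : (0 : ℝ) < m := by exact_mod_cast hm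
      have hm1 : (0 : ℝ) < (m : ℝ) + 1 := by linarith
      have hq : (0 : ℝ) < (m : ℝ) / ((m : ℝ) + 1) := by positivity
      have h1 := Real.log_le_sub_one_of_pos hq
      rw [Real.log_div (by positivity) (by positivity)] at h1
      have : (m : ℝ) / ((m : ℝ) + 1) - 1 = -(1 / ((m : ℝ) + 1)) := by field_simp; ring
      rw [this] at h1
      linarith
    rw [Finset.sum_range_succ]
    have := ih hm
    push_cast
    push_cast at hlog
    linarith

lemma fseq_bound (x : ℝ) (m : ℕ) (hm : 1 ≤ m) (hf : ∀ c ≤ m, 0 < fseq x c) :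
    2 * (m : ℝ) ≤ x ^ 2 + 1 + Real.log m := by
  have hgt1 : ∀ c < m, 1 < fseq x c := by
    intro c hc
    have ha := hf c hc.le
    have hb := hf (c + 1) hc
    have hrfl : fseq x (c + 1) = fseq x c - 1 / fseq x c := rfl
    have hab : fseq x c * fseq x (c + 1) = fseq x c ^ 2 - 1 := by
      rw [hrfl]; field_simp
    nlinarith
  have hrec : ∀ c < m, fseq x c ^ 2 = fseq x (c + 1) ^ 2 + 2 - 1 / fseq x c ^ 2 := by
    intro c hc
    have ha := hgt1 c hc
    have hrfl : fseq x (c + 1) = fseq x c - 1 / fseq x c := rfl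
    rw [hrfl]
    field_simp
    ring
  have hlow : ∀ t, t ≤ m → (t : ℝ) ≤ fseq x (m - t) ^ 2 := by
    intro t
    induction t with
    | zero => intro _; simpa using sq_nonneg (fseq x m)
    | succ t iht =>
      intro ht
      have hc : m - (t + 1) < m := by omega
      have h1 := hgt1 _ hc
      have h2 := hrec _ hc
      have hmt : m - (t + 1) + 1 = m - t := by omega
      rw [hmt] at h2
      have h3 := iht (by omega)
      have hsq : 1 ≤ fseq x (m - (t + 1)) ^ 2 := by nlinarith
      have hinv : 1 / fseq x (m - (t + 1)) ^ 2 ≤ 1 := by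
        rw [div_le_one (by nlinarith)]
        exact hsq
      push_cast
      linarith
  have htel : ∑ c ∈ Finset.range m, (fseq x c ^ 2 - fseq x (c + 1) ^ 2)
      = x ^ 2 - fseq x m ^ 2 := by
    rw [Finset.sum_range_sub' (fun c => fseq x c ^ 2)]
    rfl
  have hterm : ∀ c ∈ Finset.range m, (2 : ℝ) - 1 / ((m : ℝ) - c) ≤ fseq x c ^ 2 - fseq x (c + 1) ^ 2 := by
    intro c hc
    rw [Finset.mem_range] at hc
    have h2 := hrec c hc
    have hg : ((m - c : ℕ) : ℝ) ≤ fseq x c ^ 2 := by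
      have := hlow (m - c) (by omega)
      rw [show m - (m - c) = c by omega] at this
      exact this
    have hmc : ((m - c : ℕ) : ℝ) = (m : ℝ) - c := by
      have : c ≤ m := hc.le
      push_cast [Nat.cast_sub this]
      ring
    rw [hmc] at hg
    have hpos : (0 : ℝ) < (m : ℝ) - c := by
      have : (c : ℝ) < m := by exact_mod_cast hc
      linarith
    have hinv : 1 / fseq x c ^ 2 ≤ 1 / ((m : ℝ) - c) :=
      one_div_le_one_div_of_le hpos hg
    linarith
  have hsum : ∑ c ∈ Finset.range m, ((2 : ℝ) - 1 / ((m : ℝ) - c)) ≤ x ^ 2 - fseq x m ^ 2 := by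
    rw [← htel]
    exact Finset.sum_le_sum hterm
  have hre : ∑ c ∈ Finset.range m, (1 : ℝ) / ((m : ℝ) - c) = ∑ j ∈ Finset.range m, 1 / ((j : ℝ) + 1) := by
    have := Finset.sum_range_reflect (fun j => (1 : ℝ) / ((j : ℝ) + 1)) m
    rw [← this]
    apply Finset.sum_congr rfl
    intro c hc
    rw [Finset.mem_range] at hc
    have h1 : ((m - 1 - c : ℕ) : ℝ) + 1 = (m : ℝ) - c := by
      have : c ≤ m - 1 := by omega
      push_cast [Nat.cast_sub this, Nat.cast_sub (show 1 ≤ m by omega)]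
      ring
    rw [h1]
  have hharm := harm m hm
  rw [Finset.sum_sub_distrib, Finset.sum_const, Finset.card_range, hre] at hsum
  have hfm : 0 ≤ fseq x m ^ 2 := sq_nonneg _
  simp only [nsmul_eq_mul] at hsum
  linarith
lemma greedy_lt_exists {n : ℕ} (G : SimpleGraph (Fin n)) {i : Fin n} {c : ℕ}
    (h : c < greedyColor G i) : ∃ j, j < i ∧ G.Adj j i ∧ greedyColor G j = c := by
  rw [greedyColor] at h
  have := Nat.notMem_of_lt_sInf h
  simp only [Set.mem_setOf_eq] at this
  push_neg at this
  obtain ⟨j, hj1, hj2, hj3⟩ := this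
  exact ⟨j, hj1, hj2, hj3⟩

lemma exists_witness_coloring {V : Type} [Fintype V] [Nonempty V] (G : SimpleGraph V) :
    ∃ (col : V → ℕ) (m : ℕ),
      (∀ (i : V) (c : ℕ), c < col i → ∃ j, G.Adj j i ∧ col j = c) ∧
      (∃ i, col i = m) ∧ grundyNumber G ≤ m + 1 := by
  classical
  rw [grundyNumber]
  have hne : Nonempty (Fin (Fintype.card V) ≃ V) := ⟨(Fintype.equivFin V).symm⟩
  obtain ⟨σ, -, hσ⟩ := Finset.exists_mem_eq_sup (Finset.univ : Finset (Fin (Fintype.card V) ≃ V))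
    Finset.univ_nonempty (fun σ => (Finset.univ.image (greedyColor (G.comap σ))).card)
  set col0 := greedyColor (G.comap σ) with hcol0
  set col : V → ℕ := fun v => col0 (σ.symm v) with hcol
  obtain ⟨imax, -, hmax⟩ := Finset.exists_mem_eq_sup (Finset.univ : Finset V)
    Finset.univ_nonempty col
  set m := Finset.univ.sup col with hm
  refine ⟨col, m, ?_, ⟨imax, hmax.symm⟩, ?_⟩
  · intro i c hc
    obtain ⟨j', hj1, hj2, hj3⟩ := greedy_lt_exists (G.comap σ) hc
    refine ⟨σ j', ?_, ?_⟩
    · have : G.Adj (σ j') (σ (σ.symm i)) := hj2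
      rwa [Equiv.apply_symm_apply] at this
    · simpa [hcol] using hj3
  · rw [hσ]
    have hsub : Finset.univ.image col0 ⊆ Finset.range (m + 1) := by
      intro c hcmem
      obtain ⟨j, -, rfl⟩ := Finset.mem_image.1 hcmem
      rw [Finset.mem_range, Nat.lt_succ_iff]
      have : col0 j = col (σ j) := by simp [hcol]
      rw [this]
      exact Finset.le_sup (Finset.mem_univ _)
    calc (Finset.univ.image col0).card ≤ (Finset.range (m + 1)).card := Finset.card_le_card hsub
      _ = m + 1 := Finset.card_range _
lemma le_sq_of_forall_gt {t B : ℝ} (ht : 0 ≤ t) (h : ∀ y, t < y → B ≤ y ^ 2) : B ≤ t ^ 2 := by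
  by_contra hc
  push_neg at hc
  have hd1 : 0 < (B - t ^ 2) / (2 * t + 2) := div_pos (by linarith) (by linarith)
  set δ := min 1 ((B - t ^ 2) / (2 * t + 2)) with hδdef
  have hδpos : 0 < δ := lt_min one_pos hd1
  have hδ1 : δ ≤ 1 := min_le_left _ _
  have hδ2 : δ * (2 * t + 2) ≤ B - t ^ 2 := by
    rw [← le_div_iff₀ (by linarith : (0:ℝ) < 2 * t + 2)]
    exact min_le_right _ _
  have hy := h (t + δ) (by linarith)
  nlinarith

/-- the error function -/

noncomputable def epsFn (x : ℝ) : ℝ :=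
  Real.sqrt (x ^ 2 + 1 + Real.log (max (x ^ 2) 1)) - x

lemma epsFn_inner_nonneg (x : ℝ) : 0 ≤ x ^ 2 + 1 + Real.log (max (x ^ 2) 1) := by
  have h1 : (1 : ℝ) ≤ max (x ^ 2) 1 := le_max_right _ _
  have := Real.log_nonneg h1
  nlinarith [sq_nonneg x]

/-- per-graph key inequality -/

lemma key_ineq {V : Type} [Fintype V] [Nonempty V] (G : SimpleGraph V) :
    (grundyNumber G : ℝ) ≤ (mu1 G + epsFn (mu1 G)) ^ 2 / 2 + 1 := by
  obtain ⟨col, m, hcol, ⟨imax, himax⟩, hgr⟩ := exists_witness_coloring G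
  have hth : mu1 G = th (mp G Finset.univ) := by
    rw [mu1, matchingPolynomial_eq_mp]; rfl
  set t := mu1 G with htdef
  have ht0 : 0 ≤ t := by rw [hth]; exact th_mp_nonneg G _
  set inner := t ^ 2 + 1 + Real.log (max (t ^ 2) 1) with hinner
  have hinner0 : 0 ≤ inner := epsFn_inner_nonneg t
  have hsq : (t + epsFn t) ^ 2 = inner := by
    rw [epsFn]
    rw [show t + (Real.sqrt (t ^ 2 + 1 + Real.log (max (t ^ 2) 1)) - t)
        = Real.sqrt inner by rw [hinner]; ring]
    exact Real.sq_sqrt hinner0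
  have hgrc : (grundyNumber G : ℝ) ≤ (m : ℝ) + 1 := by exact_mod_cast hgr
  rcases Nat.eq_zero_or_pos m with rfl | hm
  · rw [hsq]
    have : (grundyNumber G : ℝ) ≤ 1 := by exact_mod_cast hgr
    linarith
  -- main case : m ≥ 1
  have hbound : 2 * (m : ℝ) ≤ t ^ 2 + 1 + Real.log m := by
    have hforall : ∀ y, t < y → 2 * (m : ℝ) - 1 - Real.log m ≤ y ^ 2 := by
      intro y hy
      have hpos : ∀ s : Finset V, 0 < (mp G s).eval y := by
        intro s
        refine th_lt_pos (mp_monic G s) ?_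
        calc th (mp G s) ≤ th (mp G Finset.univ) := th_mono G _ _ (Finset.subset_univ s)
          _ = t := hth.symm
          _ < y := hy
      have hfpos : ∀ c ≤ m, 0 < fseq y c := by
        intro c hcm
        have hex : ∃ i, col i = c := by
          rcases eq_or_lt_of_le hcm with rfl | hlt
          · exact ⟨imax, himax⟩
          · obtain ⟨j, -, hj⟩ := hcol imax c (by omega)
            exact ⟨j, hj⟩
        obtain ⟨i, hi⟩ := hex
        have := ratio G col hcol y hpos c Finset.univ i (Finset.mem_univ i) hi
          (fun j _ => Finset.mem_univ j)
        by_contra hf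
        push_neg at hf
        have h1 : fseq y c * (mp G (Finset.univ.erase i)).eval y ≤ 0 :=
          mul_nonpos_of_nonpos_of_nonneg hf (hpos _).le
        have := hpos Finset.univ
        linarith
      have := fseq_bound y m hm hfpos
      linarith
    have := le_sq_of_forall_gt ht0 hforall
    linarith
  -- m ≤ t², hence log m ≤ log (max t² 1)
  have hmle : (m : ℝ) ≤ t ^ 2 := by
    have hm1 : (1 : ℝ) ≤ (m : ℝ) := by exact_mod_cast hm
    have hlog := Real.log_le_sub_one_of_pos (show (0:ℝ) < m by linarith)
    linarith
  have hlogle : Real.log m ≤ Real.log (max (t ^ 2) 1) := by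
    apply Real.log_le_log (by exact_mod_cast hm)
    exact le_trans hmle (le_max_left _ _)
  have h2m : 2 * (m : ℝ) ≤ inner := by rw [hinner]; linarith
  rw [hsq]
  linarith

end GrundyAux

/-- There is a function `ε` with `ε(x) → 0` as `x → ∞` such that every graph `G`
with at least one vertex satisfies `Γ(G) ≤ (μ₁(G) + ε(μ₁(G)))² / 2 + 1`. -/
theorem grundy_le_mu1_bound_little_o :
    ∃ ε : ℝ → ℝ, Filter.Tendsto ε Filter.atTop (nhds 0) ∧
      ∀ (V : Type) [Fintype V] [Nonempty V] (G : SimpleGraph V),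
        (grundyNumber G : ℝ) ≤ (mu1 G + ε (mu1 G)) ^ 2 / 2 + 1 := by
  refine ⟨GrundyAux.epsFn, ?_, fun V _ _ G => GrundyAux.key_ineq G⟩
  -- tendsto
  have hub : ∀ᶠ x : ℝ in Filter.atTop, GrundyAux.epsFn x ≤ 1 / x + 2 * (Real.log x / x) := by
    filter_upwards [Filter.eventually_ge_atTop (1 : ℝ)] with x hx
    have hx0 : (0 : ℝ) < x := by linarith
    have hmax : max (x ^ 2) 1 = x ^ 2 := max_eq_left (by nlinarith)
    have hlogsq : Real.log (x ^ 2) = 2 * Real.log x := by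
      rw [Real.log_pow]; push_cast; ring
    have hL : 0 ≤ Real.log x := Real.log_nonneg hx
    set a := 1 + 2 * Real.log x with ha
    have ha0 : 0 < a := by linarith
    have hinner : x ^ 2 + 1 + Real.log (max (x ^ 2) 1) = x ^ 2 + a := by
      rw [hmax, hlogsq, ha]; ring
    have hsqrt : Real.sqrt (x ^ 2 + a) ≤ x + a / (2 * x) := by
      have h1 : x ^ 2 + a ≤ (x + a / (2 * x)) ^ 2 := by
        have : (x + a / (2 * x)) ^ 2 = x ^ 2 + a + (a / (2 * x)) ^ 2 := by
          field_simp
          ring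
        nlinarith [sq_nonneg (a / (2 * x))]
      calc Real.sqrt (x ^ 2 + a) ≤ Real.sqrt ((x + a / (2 * x)) ^ 2) := Real.sqrt_le_sqrt h1
        _ = x + a / (2 * x) := Real.sqrt_sq (by positivity)
    have : GrundyAux.epsFn x ≤ a / (2 * x) := by
      rw [GrundyAux.epsFn, hinner]
      linarith
    calc GrundyAux.epsFn x ≤ a / (2 * x) := this
      _ ≤ 1 / x + 2 * (Real.log x / x) := by
        have heq : a / (2 * x) = 1 / (2 * x) + Real.log x / x := by
          rw [ha]; field_simp
        have h1 : 1 / (2 * x) ≤ 1 / x := one_div_le_one_div_of_le hx0 (by linarith)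
        have h2 : 0 ≤ Real.log x / x := div_nonneg hL hx0.le
        rw [heq]
        linarith
  have hlb : ∀ᶠ x : ℝ in Filter.atTop, (0 : ℝ) ≤ GrundyAux.epsFn x := by
    filter_upwards [Filter.eventually_ge_atTop (1 : ℝ)] with x hx
    have hx0 : (0 : ℝ) ≤ x := by linarith
    have h1 : x = Real.sqrt (x ^ 2) := (Real.sqrt_sq hx0).symm
    have h2 : Real.sqrt (x ^ 2) ≤ Real.sqrt (x ^ 2 + 1 + Real.log (max (x ^ 2) 1)) := by
      apply Real.sqrt_le_sqrt
      have := Real.log_nonneg (le_max_right (x ^ 2) 1)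
      linarith
    rw [GrundyAux.epsFn]
    nlinarith [h1, h2]
  have htend : Filter.Tendsto (fun x : ℝ => 1 / x + 2 * (Real.log x / x))
      Filter.atTop (nhds 0) := by
    have t1 : Filter.Tendsto (fun x : ℝ => 1 / x) Filter.atTop (nhds 0) := by
      simpa using tendsto_inv_atTop_zero
    have t2 : Filter.Tendsto (fun x : ℝ => Real.log x / x) Filter.atTop (nhds 0) := by
      have := Real.isLittleO_log_id_atTop.tendsto_div_nhds_zero
      simpa using this
    have := t1.add ((t2.const_mul (2 : ℝ)))
    simpa using this
  exact tendsto_of_tendsto_of_tendsto_of_le_of_le' tendsto_const_nhds htend hlb hub
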